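/- Let (ρ_k)_{k≥1}, (d_k)_{k≥1} be positive reals with 2ρ_k ≤ ρ_{k+1} and d_k ≤ 0.1ρ_k, set I_k = [ρ_k − d_k, ρ_k + d_k], and assume dist(ρ_k, ℤ) ≥ 1/3 for all k. Let (a_n)_{n∈ℤ} be real numbers with a_0 ≠ 0, and suppose there are constants 0 < c₁ ≤ c₂ such that for all indices k and all m ≠ k: c₁/(d_k·ρ_k) ≤ Σ_{n∈I_k∩ℤ} a_n²/(ρ_k − n)² ≤ c₂/(d_k·ρ_k); Σ_{n∈I_m∩ℤ} a_n²/(|ρ_k − n|·|ρ_m − n|) ≤ c₂/(ρ_k·ρ_m); and Σ_{n∈I_k∩ℤ} a_n²/|ρ_k − n| ≤ c₂/ρ_k. Then there exists ε > 0 depending only on c₁ and c₂ with the following property: if Σ_k d_k/ρ_k ≤ ε, then there exists a real sequence (b_n)_{n∈ℤ} ∈ ℓ²(ℤ) vanishing outside {0} ∪ ⋃_k (I_k ∩ ℤ) such that the sequence (a_n b_n)_{n∈ℤ} is absolutely summable, Σ_{n∈ℤ} a_n b_n ≠ 0, and Σ_{n∈ℤ} a_n b_n/(ρ_k − n) = 0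 for every k. -/

import Mathlib

open scoped Classical


set_option maxHeartbeats 1000000

open scoped Classical

lemma partition_tsum
    (N : ℕ → Finset ℤ)
    (hdisj : ∀ k m : ℕ, k ≠ m → ∀ n : ℤ, n ∈ N k → n ∈ N m → False)
    (h0 : ∀ m, (0:ℤ) ∉ N m)
    (f : ℤ → ℝ)
    (hsupp : ∀ n : ℤ, n ≠ 0 → (∀ m, n ∉ N m) → f n = 0)
    (c : ℕ → ℝ) (hc : ∀ m, (∑ n ∈ N m, |f n|) ≤ c m) (hcs : Summable c) :
    Summable f ∧ Summable (fun m => ∑ n ∈ N m, f n) ∧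
      (∑' n : ℤ, f n) = f 0 + ∑' m : ℕ, ∑ n ∈ N m, f n := by
  set M : ℕ → Finset ℤ := fun j => Nat.rec {0} (fun m _ => N m) j with hM
  have hM0 : M 0 = {0} := rfl
  have hMs : ∀ m, M (m + 1) = N m := fun m => rfl
  set e : (Σ j : ℕ, {n : ℤ // n ∈ M j}) → ℤ := fun p => (p.2 : ℤ) with he'
  have he : Function.Injective e := by
    rintro ⟨j, n, hn⟩ ⟨j', n', hn'⟩ h
    obtain rfl : n = n' := h
    have hj : j = j' := by
      rcases j with _ | m <;> rcases j' with _ | m'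
      · rfl
      · rw [hM0, Finset.mem_singleton] at hn
        rw [hMs, hn] at hn'
        exact absurd hn' (h0 m')
      · rw [hM0, Finset.mem_singleton] at hn'
        rw [hMs, hn'] at hn
        exact absurd hn (h0 m)
      · by_cases hmm : m = m'
        · rw [hmm]
        · rw [hMs] at hn hn'
          exact absurd hn' (fun h => hdisj m m' hmm n hn h)
    subst hj
    rfl
  have hrange : ∀ x ∉ Set.range e, f x = 0 := by
    intro x hx
    apply hsupp
    · intro hx0
      exact hx ⟨⟨0, ⟨x, by rw [hM0, Finset.mem_singleton]; exact hx0⟩⟩, rfl⟩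
    · intro m hm
      exact hx ⟨⟨m + 1, ⟨x, by rw [hMs]; exact hm⟩⟩, rfl⟩
  -- abs summability on the sigma type
  have hfib : ∀ j : ℕ, Summable fun y : {n : ℤ // n ∈ M j} => |f (e ⟨j, y⟩)| :=
    fun j => Summable.of_finite
  have hmarg_eq : ∀ j : ℕ, (∑' y : {n : ℤ // n ∈ M j}, |f (e ⟨j, y⟩)|)
      = ∑ n ∈ M j, |f n| := by
    intro j
    exact (M j).tsum_subtype (fun n => |f n|)
  have hc' : Summable fun j : ℕ => ∑ n ∈ M j, |f n| := by
    have hcs' : Summable fun j : ℕ => Nat.rec (motive := fun _ => ℝ) |f 0| (fun m _ => c m) j := by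
      refine (summable_nat_add_iff 1).mp ?_
      exact hcs
    refine Summable.of_nonneg_of_le (fun j => Finset.sum_nonneg fun n _ => abs_nonneg _)
      (fun j => ?_) hcs'
    rcases j with _ | m
    · rw [hM0, Finset.sum_singleton]; exact le_rfl
    · rw [hMs]; exact hc m
  have hsig_abs : Summable fun p : (Σ j : ℕ, {n : ℤ // n ∈ M j}) => |f (e p)| := by
    refine (summable_sigma_of_nonneg fun p => abs_nonneg _).2 ⟨hfib, ?_⟩
    refine hc'.congr fun j => ?_
    exact (hmarg_eq j).symm
  have hsig : Summable fun p => f (e p) := by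
    refine summable_abs_iff.mp ?_
    exact hsig_abs
  have hf : Summable f := (he.summable_iff hrange).mp hsig
  have htse : (∑' p, f (e p)) = ∑' n : ℤ, f n := by
    refine he.tsum_eq ?_
    intro x hx
    by_contra h
    exact hx (hrange x h)
  have hfibsum : ∀ j, (∑' y : {n : ℤ // n ∈ M j}, f (e ⟨j, y⟩)) = ∑ n ∈ M j, f n :=
    fun j => (M j).tsum_subtype f
  have hmargsum : Summable fun j : ℕ => ∑ n ∈ M j, f n := by
    refine (hsig.sigma.congr fun j => ?_)
    exact hfibsum j
  have hts : (∑' n : ℤ, f n) = ∑' j : ℕ, ∑ n ∈ M j, f n := by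
    rw [← htse, Summable.tsum_sigma hsig]
    exact tsum_congr hfibsum
  refine ⟨hf, (summable_nat_add_iff 1).mpr hmargsum, ?_⟩
  rw [hts, Summable.tsum_eq_zero_add hmargsum, hM0, Finset.sum_singleton]

/-- **Construction of the sequence `(b_n)` (fixed point argument).**
Given a lacunary family of intervals `I_k = [ρ_k - d_k, ρ_k + d_k]` with
`dist(ρ_k, ℤ) ≥ 1/3` and a real sequence `(a_n)` with `a_0 ≠ 0` satisfying the stated
two-sided bounds with constants `0 < c₁ ≤ c₂`, there is `ε > 0` depending only on
`c₁, c₂` such that if `∑ d_k/ρ_k ≤ ε` then one can find `(b_n) ∈ ℓ²(ℤ)` supported in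
`{0} ∪ ⋃ (I_k ∩ ℤ)` with `(a_n b_n) ∈ ℓ¹`, `∑ a_n b_n ≠ 0` and
`∑ a_n b_n/(ρ_k - n) = 0` for every `k`. -/
theorem stmt3 (c₁ c₂ : ℝ) (hc₁ : 0 < c₁) (hc₁₂ : c₁ ≤ c₂) :
    ∃ ε > (0:ℝ), ∀ (ρ d : ℕ → ℝ) (a : ℤ → ℝ),
      (∀ k, 0 < ρ k) → (∀ k, 2 * ρ k ≤ ρ (k + 1)) →
      (∀ k, 0 < d k) → (∀ k, d k ≤ 0.1 * ρ k) →
      (∀ k, ∀ n : ℤ, (1 : ℝ) / 3 ≤ |ρ k - n|) →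
      a 0 ≠ 0 →
      -- lower and upper bounds for `∑_{n ∈ I_k} a_n²/(ρ_k - n)²`
      (∀ k, c₁ / (d k * ρ k) ≤
        ∑ᶠ n : ℤ, (if (n : ℝ) ∈ Set.Icc (ρ k - d k) (ρ k + d k) then
          a n ^ 2 / (ρ k - n) ^ 2 else 0)) →
      (∀ k, (∑ᶠ n : ℤ, if (n : ℝ) ∈ Set.Icc (ρ k - d k) (ρ k + d k) then
          a n ^ 2 / (ρ k - n) ^ 2 else 0) ≤ c₂ / (d k * ρ k)) →
      -- cross terms
      (∀ k m : ℕ, m ≠ k →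
        (∑ᶠ n : ℤ, if (n : ℝ) ∈ Set.Icc (ρ m - d m) (ρ m + d m) then
          a n ^ 2 / (|ρ k - n| * |ρ m - n|) else 0) ≤ c₂ / (ρ k * ρ m)) →
      -- first moments
      (∀ k, (∑ᶠ n : ℤ, if (n : ℝ) ∈ Set.Icc (ρ k - d k) (ρ k + d k) then
          a n ^ 2 / |ρ k - n| else 0) ≤ c₂ / ρ k) →
      -- smallness of the total logarithmic length
      Summable (fun k => d k / ρ k) → (∑' k : ℕ, d k / ρ k) ≤ ε →
      ∃ b : ℤ → ℝ,
        Summable (fun n : ℤ => b n ^ 2) ∧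
        (∀ n : ℤ, n ≠ 0 → (∀ k, (n : ℝ) ∉ Set.Icc (ρ k - d k) (ρ k + d k)) → b n = 0) ∧
        Summable (fun n : ℤ => |a n * b n|) ∧
        (∑' n : ℤ, a n * b n) ≠ 0 ∧
        ∀ k, (∑' n : ℤ, a n * b n / (ρ k - n)) = 0 := by
  have hc₂ : 0 < c₂ := lt_of_lt_of_le hc₁ hc₁₂
  refine ⟨c₁ / (4 * c₂), by positivity, ?_⟩
  intro ρ d a hρ hρ2 hd hd1 h13 ha0 hlow hup hcross hmom hsum hε
  set ε : ℝ := c₁ / (4 * c₂) with hεdef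
  -- the integer intervals
  set N : ℕ → Finset ℤ := fun k => Finset.Icc ⌈ρ k - d k⌉ ⌊ρ k + d k⌋ with hNdef
  have hNmem : ∀ (k : ℕ) (n : ℤ), n ∈ N k ↔ (n : ℝ) ∈ Set.Icc (ρ k - d k) (ρ k + d k) := by
    intro k n
    simp [hNdef, Finset.mem_Icc, Int.ceil_le, Int.le_floor, Set.mem_Icc]
  have hconv : ∀ (k : ℕ) (g : ℤ → ℝ),
      (∑ᶠ n : ℤ, if (n : ℝ) ∈ Set.Icc (ρ k - d k) (ρ k + d k) then g n else 0)
        = ∑ n ∈ N k, g n := by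
    intro k g
    rw [finsum_eq_sum_of_support_subset _ (s := N k) ?_]
    · exact Finset.sum_congr rfl fun n hn => if_pos ((hNmem k n).1 hn)
    · intro n hn
      simp only [Function.mem_support] at hn
      by_cases hns : (n : ℝ) ∈ Set.Icc (ρ k - d k) (ρ k + d k)
      · exact (hNmem k n).2 hns
      · exact absurd (if_neg hns) hn
  -- nonvanishing denominators
  have hne : ∀ (k : ℕ) (n : ℤ), ρ k - (n : ℝ) ≠ 0 := by
    intro k n h
    have := h13 k n
    rw [h, abs_zero] at this
    linarith
  -- basic geometry of the intervals
  have hρm : Monotone ρ := monotone_nat_of_le_succ fun k => by nlinarith [hρ k, hρ2 k]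
  have hlt : ∀ k m : ℕ, k < m → 2 * ρ k ≤ ρ m := by
    intro k m h
    exact (hρ2 k).trans (hρm h)
  have hNub : ∀ (k : ℕ) (n : ℤ), n ∈ N k → (n : ℝ) ≤ ρ k + d k ∧ ρ k - d k ≤ (n : ℝ) := by
    intro k n hn
    have := (hNmem k n).1 hn
    exact ⟨this.2, this.1⟩
  have hdisjN : ∀ k m : ℕ, k ≠ m → ∀ n : ℤ, n ∈ N k → n ∈ N m → False := by
    have key : ∀ k m : ℕ, k < m → ∀ n : ℤ, n ∈ N k → n ∈ N m → False := by
      intro k m hkm n hk hm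
      obtain ⟨h1, -⟩ := hNub k n hk
      obtain ⟨-, h2⟩ := hNub m n hm
      have h3 := hlt k m hkm
      have h4 := hd1 k
      have h5 := hd1 m
      have h6 := hρ k
      norm_num at h4 h5
      linarith
    intro k m hkm n hk hm
    rcases lt_or_gt_of_ne hkm with h | h
    · exact key k m h n hk hm
    · exact key m k h n hm hk
  have h0N : ∀ m : ℕ, (0 : ℤ) ∉ N m := by
    intro m hm
    obtain ⟨-, h2⟩ := hNub m 0 hm
    have := hd1 m
    have := hρ m
    norm_num at h2 ⊢
    linarith
  -- the basic sums
  set A : ℕ → ℝ := fun k => ∑ n ∈ N k, a n ^ 2 / (ρ k - n) ^ 2 with hAdef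
  set B : ℕ → ℝ := fun k => ∑ n ∈ N k, a n ^ 2 / |ρ k - (n : ℝ)| with hBdef
  set Gabs : ℕ → ℕ → ℝ := fun k m => ∑ n ∈ N m, a n ^ 2 / (|ρ k - (n : ℝ)| * |ρ m - (n : ℝ)|)
    with hGabsdef
  set G : ℕ → ℕ → ℝ := fun k m => ∑ n ∈ N m, a n ^ 2 / ((ρ k - (n : ℝ)) * (ρ m - (n : ℝ)))
    with hGdef
  have hA1 : ∀ k, c₁ / (d k * ρ k) ≤ A k := by
    intro k
    have := hlow k
    rwa [hconv k (fun n => a n ^ 2 / (ρ k - n) ^ 2)] at this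
  have hA2 : ∀ k, A k ≤ c₂ / (d k * ρ k) := by
    intro k
    have := hup k
    rwa [hconv k (fun n => a n ^ 2 / (ρ k - n) ^ 2)] at this
  have hB2 : ∀ k, B k ≤ c₂ / ρ k := by
    intro k
    have := hmom k
    rwa [hconv k (fun n => a n ^ 2 / |ρ k - (n : ℝ)|)] at this
  have hGabs2 : ∀ k m : ℕ, m ≠ k → Gabs k m ≤ c₂ / (ρ k * ρ m) := by
    intro k m hmk
    have := hcross k m hmk
    rwa [hconv m (fun n => a n ^ 2 / (|ρ k - (n : ℝ)| * |ρ m - (n : ℝ)|))] at this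
  have hGabs0 : ∀ k m : ℕ, 0 ≤ Gabs k m := by
    intro k m
    refine Finset.sum_nonneg fun n _ => ?_
    positivity
  have hGle : ∀ k m : ℕ, |G k m| ≤ Gabs k m := by
    intro k m
    refine (Finset.abs_sum_le_sum_abs _ _).trans (le_of_eq ?_)
    refine Finset.sum_congr rfl fun n _ => ?_
    rw [abs_div, abs_mul, abs_of_nonneg (sq_nonneg (a n))]
  have hG2 : ∀ k m : ℕ, m ≠ k → |G k m| ≤ c₂ / (ρ k * ρ m) := fun k m hmk =>
    (hGle k m).trans (hGabs2 k m hmk)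
  have hGkk : ∀ k, G k k = A k := by
    intro k
    refine Finset.sum_congr rfl fun n _ => ?_
    rw [sq (ρ k - (n : ℝ))]
  have hGabskk : ∀ k, Gabs k k = A k := by
    intro k
    refine Finset.sum_congr rfl fun n _ => ?_
    rw [abs_mul_abs_self, sq (ρ k - (n : ℝ))]
  have hA0 : ∀ k, 0 < A k := fun k =>
    lt_of_lt_of_le (div_pos hc₁ (mul_pos (hd k) (hρ k))) (hA1 k)
  -- the fundamental cross-sum estimate
  have hdρ0 : ∀ m, (0:ℝ) ≤ d m / ρ m := fun m => le_of_lt (div_pos (hd m) (hρ m))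
  have hcrossb : ∀ (k : ℕ) (w : ℕ → ℝ) (Mw : ℝ), 0 ≤ Mw → (∀ m, |w m| ≤ Mw) →
      Summable (fun m => if m = k then 0 else d m * w m * G k m) ∧
      |∑' m, if m = k then 0 else d m * w m * G k m| ≤ Mw * c₂ / ρ k * ε := by
    intro k w Mw hMw hw
    have habs : ∀ m, |if m = k then 0 else d m * w m * G k m|
        ≤ (Mw * c₂ / ρ k) * (d m / ρ m) := by
      intro m
      by_cases hm : m = k
      · rw [if_pos hm, abs_zero]
        exact mul_nonneg (div_nonneg (mul_nonneg hMw hc₂.le) (hρ k).le) (hdρ0 m)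
      · rw [if_neg hm]
        have h1 : |d m * w m * G k m| = d m * |w m| * |G k m| := by
          rw [abs_mul, abs_mul, abs_of_pos (hd m)]
        rw [h1]
        have h2 : d m * |w m| * |G k m| ≤ d m * Mw * (c₂ / (ρ k * ρ m)) := by
          have := hG2 k m hm
          have hd' := (hd m).le
          have h3 : d m * |w m| ≤ d m * Mw := mul_le_mul_of_nonneg_left (hw m) hd'
          exact mul_le_mul h3 this (abs_nonneg _) (by positivity)
        refine h2.trans (le_of_eq ?_)
        field_simp
    have hmaj : Summable fun m => (Mw * c₂ / ρ k) * (d m / ρ m) := hsum.mul_left _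
    have habs_sum : Summable fun m => |if m = k then 0 else d m * w m * G k m| :=
      Summable.of_nonneg_of_le (fun m => abs_nonneg _) habs hmaj
    have hsummable : Summable fun m => if m = k then 0 else d m * w m * G k m :=
      summable_abs_iff.mp habs_sum
    refine ⟨hsummable, ?_⟩
    calc |∑' m, if m = k then 0 else d m * w m * G k m|
        ≤ ∑' m, |if m = k then 0 else d m * w m * G k m| := by
          have := norm_tsum_le_tsum_norm
            (f := fun m => if m = k then 0 else d m * w m * G k m)
            (by simpa [Real.norm_eq_abs] using habs_sum)
          simpa [Real.norm_eq_abs] using this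
      _ ≤ ∑' m, (Mw * c₂ / ρ k) * (d m / ρ m) := Summable.tsum_le_tsum habs habs_sum hmaj
      _ = (Mw * c₂ / ρ k) * ∑' m, d m / ρ m := tsum_mul_left
      _ ≤ (Mw * c₂ / ρ k) * ε := by
          refine mul_le_mul_of_nonneg_left hε (div_nonneg (mul_nonneg hMw hc₂.le) (hρ k).le)
      _ = Mw * c₂ / ρ k * ε := rfl
  have hc₁' : c₁ ≠ 0 := hc₁.ne'
  have hc₂' : c₂ ≠ 0 := hc₂.ne'
  -- the fixed point operator
  set F : (ℕ → ℝ) → ℕ → ℝ := fun u k =>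
    -(1 / (A k * d k)) * (1 / ρ k + ∑' m, if m = k then 0 else d m * u m * G k m) with hFdef
  have hAd0 : ∀ k, 0 < A k * d k := fun k => mul_pos (hA0 k) (hd k)
  have hAd : ∀ k, c₁ / ρ k ≤ A k * d k := by
    intro k
    have h := mul_le_mul_of_nonneg_right (hA1 k) (hd k).le
    calc c₁ / ρ k = c₁ / (d k * ρ k) * d k := by
          have h1 := (hd k).ne'
          have h2 := (hρ k).ne'
          field_simp
      _ ≤ A k * d k := h
  have hinv : ∀ k, 1 / (A k * d k) ≤ ρ k / c₁ := by
    intro k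
    have h := one_div_le_one_div_of_le (div_pos hc₁ (hρ k)) (hAd k)
    rwa [one_div_div] at h
  have hFbound : ∀ (u : ℕ → ℝ) (Mu : ℝ), 0 ≤ Mu → (∀ m, |u m| ≤ Mu) →
      ∀ k, |F u k| ≤ (1 + Mu * c₂ * ε) / c₁ := by
    intro u Mu hMu hu k
    obtain ⟨hsummable, hSb⟩ := hcrossb k u Mu hMu hu
    have hpos : (0:ℝ) < 1 / (A k * d k) := by
      have := hAd0 k
      positivity
    have h1 : |F u k| = (1 / (A k * d k))
        * |1 / ρ k + ∑' m, if m = k then 0 else d m * u m * G k m| := by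
      simp only [hFdef]
      rw [abs_mul, abs_neg, abs_of_pos hpos]
    rw [h1]
    have h2 : |1 / ρ k + ∑' m, if m = k then 0 else d m * u m * G k m|
        ≤ (1 + Mu * c₂ * ε) / ρ k := by
      refine (abs_add_le _ _).trans ?_
      have hrp : (0:ℝ) < 1 / ρ k := by
        have := hρ k
        positivity
      rw [abs_of_pos hrp]
      have h3 : |∑' m, if m = k then 0 else d m * u m * G k m| ≤ Mu * c₂ * ε / ρ k :=
        hSb.trans (le_of_eq (by ring))
      calc 1 / ρ k + |∑' m, if m = k then 0 else d m * u m * G k m|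
          ≤ 1 / ρ k + Mu * c₂ * ε / ρ k := by linarith
        _ = (1 + Mu * c₂ * ε) / ρ k := by rw [add_div]
    calc (1 / (A k * d k))
        * |1 / ρ k + ∑' m, if m = k then 0 else d m * u m * G k m|
        ≤ (ρ k / c₁) * ((1 + Mu * c₂ * ε) / ρ k) :=
          mul_le_mul (hinv k) h2 (abs_nonneg _) (div_nonneg (hρ k).le hc₁.le)
      _ = (1 + Mu * c₂ * ε) / c₁ := by
          have := (hρ k).ne'
          field_simp
  set T : BoundedContinuousFunction ℕ ℝ → BoundedContinuousFunction ℕ ℝ := fun u =>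
    BoundedContinuousFunction.ofNormedAddCommGroup (F ⇑u) continuous_of_discreteTopology
      ((1 + ‖u‖ * c₂ * ε) / c₁)
      (fun k => by
        rw [Real.norm_eq_abs]
        exact hFbound (⇑u) ‖u‖ (norm_nonneg u)
          (fun m => by rw [← Real.norm_eq_abs]; exact u.norm_coe_le_norm m) k) with hTdef
  have hTapp : ∀ (v : BoundedContinuousFunction ℕ ℝ) (k : ℕ), T v k = F (⇑v) k := fun v k => rfl
  have hTlip : ∀ v w : BoundedContinuousFunction ℕ ℝ, dist (T v) (T w) ≤ (1/4) * dist v w := by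
    intro v w
    rw [BoundedContinuousFunction.dist_le (by positivity)]
    intro k
    obtain ⟨hsv, -⟩ := hcrossb k (⇑v) ‖v‖ (norm_nonneg v)
      (fun m => by rw [← Real.norm_eq_abs]; exact v.norm_coe_le_norm m)
    obtain ⟨hsw, -⟩ := hcrossb k (⇑w) ‖w‖ (norm_nonneg w)
      (fun m => by rw [← Real.norm_eq_abs]; exact w.norm_coe_le_norm m)
    obtain ⟨hsd, hSd⟩ := hcrossb k (fun m => v m - w m) (dist v w) dist_nonneg
      (fun m => by rw [← Real.dist_eq]; exact BoundedContinuousFunction.dist_coe_le_dist m)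
    rw [hTapp, hTapp, Real.dist_eq]
    have hpos : (0:ℝ) < 1 / (A k * d k) := by
      have := hAd0 k
      positivity
    have hdiff : F (⇑v) k - F (⇑w) k
        = -(1 / (A k * d k)) * (∑' m, if m = k then 0 else d m * (v m - w m) * G k m) := by
      simp only [hFdef]
      have h3 : (∑' m, if m = k then 0 else d m * v m * G k m)
          - (∑' m, if m = k then 0 else d m * w m * G k m)
          = ∑' m, if m = k then 0 else d m * (v m - w m) * G k m := by
        rw [← Summable.tsum_sub hsv hsw]
        refine tsum_congr fun m => ?_
        by_cases hm : m = k
        · simp [hm]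
        · simp only [if_neg hm]
          ring
      rw [← h3]
      ring
    calc |F (⇑v) k - F (⇑w) k|
        = (1 / (A k * d k)) * |∑' m, if m = k then 0 else d m * (v m - w m) * G k m| := by
          rw [hdiff, abs_mul, abs_neg, abs_of_pos hpos]
      _ ≤ (ρ k / c₁) * (dist v w * c₂ / ρ k * ε) :=
          mul_le_mul (hinv k) hSd (abs_nonneg _) (div_nonneg (hρ k).le hc₁.le)
      _ = 1/4 * dist v w := by
          have := (hρ k).ne'
          rw [hεdef]
          field_simp
  have hcw : ContractingWith (1/4 : NNReal) T := by
    constructor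
    · rw [← NNReal.coe_lt_coe]
      norm_num
    · refine LipschitzWith.of_dist_le_mul fun v w => ?_
      refine (hTlip v w).trans_eq ?_
      norm_num
  set u : BoundedContinuousFunction ℕ ℝ := ContractingWith.fixedPoint T hcw with hudef
  have hufix : T u = u := hcw.fixedPoint_isFixedPt
  have hueq : ∀ k, u k = F (⇑u) k := by
    intro k
    conv_lhs => rw [← hufix]
    exact hTapp u k
  have hc₂ε : c₂ * ε = c₁ / 4 := by
    rw [hεdef]
    field_simp
  have hunorm : ‖u‖ ≤ 4 / (3 * c₁) := by
    have h1 : ∀ k, |u k| ≤ 1 / c₁ + ‖u‖ / 4 := by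
      intro k
      rw [hueq k]
      refine (hFbound (⇑u) ‖u‖ (norm_nonneg u)
        (fun m => by rw [← Real.norm_eq_abs]; exact u.norm_coe_le_norm m) k).trans (le_of_eq ?_)
      rw [mul_assoc, hc₂ε, add_div]
      congr 1
      field_simp
    have h2 : ‖u‖ ≤ 1 / c₁ + ‖u‖ / 4 := by
      refine (BoundedContinuousFunction.norm_le
        (add_nonneg (one_div_pos.2 hc₁).le (by positivity))).2
        (fun k => by rw [Real.norm_eq_abs]; exact h1 k)
    rw [le_div_iff₀ (by linarith : (0:ℝ) < 3 * c₁)]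
    have h4 : ‖u‖ * c₁ ≤ (1 / c₁ + ‖u‖ / 4) * c₁ := mul_le_mul_of_nonneg_right h2 hc₁.le
    have h5 : (1 / c₁) * c₁ = 1 := one_div_mul_cancel hc₁'
    nlinarith [h4, h5]
  set C : ℝ := 4 / (3 * c₁) with hCdef
  have hC : 0 < C := by rw [hCdef]; positivity
  have hu : ∀ m, |u m| ≤ C := fun m =>
    le_trans (by rw [← Real.norm_eq_abs]; exact u.norm_coe_le_norm m) hunorm
  have hdu : ∀ m, |d m * u m| ≤ C * d m := by
    intro m
    rw [abs_mul, abs_of_pos (hd m)]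
    calc d m * |u m| ≤ d m * C := mul_le_mul_of_nonneg_left (hu m) (hd m).le
      _ = C * d m := mul_comm _ _
  have hCc₂ε : C * c₂ * ε = 1 / 3 := by
    rw [hCdef, hεdef]
    field_simp
  -- the fixed point equation in usable form
  have hfix : ∀ k, 1 / ρ k + d k * u k * A k
      + (∑' m, if m = k then 0 else d m * u m * G k m) = 0 := by
    intro k
    have h := hueq k
    simp only [hFdef] at h
    have hAk := (hA0 k).ne'
    have hdk := (hd k).ne'
    have hthis : d k * u k * A k
        = -(1 / ρ k + ∑' m, if m = k then 0 else d m * u m * G k m) := by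
      rw [h]
      field_simp
    linarith [hthis]
  -- the sequence b
  set b : ℤ → ℝ := fun n =>
    if n = 0 then 1 / a 0
    else if h : ∃ k, n ∈ N k then d h.choose * u h.choose * a n / (ρ h.choose - n) else 0
    with hbdef
  have hb0 : b 0 = 1 / a 0 := by simp [hbdef]
  have hbmem : ∀ (k : ℕ) (n : ℤ), n ∈ N k → b n = d k * u k * a n / (ρ k - n) := by
    intro k n hn
    have hn0 : n ≠ 0 := by
      rintro rfl
      exact h0N k hn
    have hex : ∃ k, n ∈ N k := ⟨k, hn⟩
    have hck : hex.choose = k := by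
      by_contra hne'
      exact hdisjN _ _ hne' n hex.choose_spec hn
    rw [hbdef]
    simp only [if_neg hn0, dif_pos hex, hck]
  have hbout : ∀ n : ℤ, n ≠ 0 → (∀ k, n ∉ N k) → b n = 0 := by
    intro n hn0 hnN
    rw [hbdef]
    simp only [if_neg hn0]
    rw [dif_neg (by rintro ⟨k, hk⟩; exact hnN k hk)]
  -- summability helper for modified sequences
  have hsumIte : ∀ (k : ℕ) (g h' : ℕ → ℝ), Summable g →
      Summable (fun m => if m = k then h' m else g m) := by
    intro k g h' hg
    have hrw : (fun m => if m = k then h' m else g m)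
        = fun m => g m + (if m = k then h' m - g m else 0) := by
      funext m
      by_cases hm : m = k
      · simp [hm]
      · simp [hm]
    rw [hrw]
    exact hg.add (summable_of_ne_finset_zero (s := {k})
      fun m hm => if_neg (by simpa using hm))
  -- (1) square-summability of b
  have hbsq : ∀ m : ℕ, ∑ n ∈ N m, |b n ^ 2| ≤ C ^ 2 * c₂ * (d m / ρ m) := by
    intro m
    have h1 : ∑ n ∈ N m, |b n ^ 2| = (d m * u m) ^ 2 * A m := by
      rw [hAdef, Finset.mul_sum]
      refine Finset.sum_congr rfl fun n hn => ?_
      rw [abs_of_nonneg (sq_nonneg _), hbmem m n hn, div_pow, mul_pow, mul_div_assoc]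
    rw [h1]
    have h2 : (d m * u m) ^ 2 ≤ (C * d m) ^ 2 := by
      rw [← sq_abs (d m * u m)]
      exact pow_le_pow_left₀ (abs_nonneg _) (hdu m) 2
    have h3 : (d m * u m) ^ 2 * A m ≤ (C * d m) ^ 2 * (c₂ / (d m * ρ m)) :=
      mul_le_mul h2 (hA2 m) (hA0 m).le (sq_nonneg _)
    refine h3.trans (le_of_eq ?_)
    have hdm := (hd m).ne'
    have hρm' := (hρ m).ne'
    field_simp
  obtain ⟨hsq_sum, -, -⟩ := partition_tsum N hdisjN h0N (fun n => b n ^ 2)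
    (fun n hn0 hnN => by beta_reduce; rw [hbout n hn0 hnN]; ring)
    (fun m => C ^ 2 * c₂ * (d m / ρ m)) hbsq (hsum.mul_left _)
  -- (2) absolute summability of a * b and nonvanishing of the sum
  have hab : ∀ m : ℕ, ∑ n ∈ N m, |a n * b n| ≤ C * c₂ * (d m / ρ m) := by
    intro m
    have hB0 : 0 ≤ B m := Finset.sum_nonneg fun n _ => by positivity
    have h1 : ∑ n ∈ N m, |a n * b n| = |d m * u m| * B m := by
      rw [hBdef, Finset.mul_sum]
      refine Finset.sum_congr rfl fun n hn => ?_
      rw [hbmem m n hn]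
      have h2 : a n * (d m * u m * a n / (ρ m - n))
          = d m * u m * (a n ^ 2 / (ρ m - n)) := by ring
      rw [h2, abs_mul, abs_div, abs_of_nonneg (sq_nonneg (a n))]
    rw [h1]
    have h3 : |d m * u m| * B m ≤ (C * d m) * (c₂ / ρ m) :=
      mul_le_mul (hdu m) (hB2 m) hB0 (mul_nonneg hC.le (hd m).le)
    refine h3.trans (le_of_eq ?_)
    have hρm' := (hρ m).ne'
    field_simp
  obtain ⟨hab_sum, hab_msum, hab_eq⟩ := partition_tsum N hdisjN h0N (fun n => a n * b n)
    (fun n hn0 hnN => by beta_reduce; rw [hbout n hn0 hnN]; ring)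
    (fun m => C * c₂ * (d m / ρ m)) hab (hsum.mul_left _)
  have hab0 : a 0 * b 0 = 1 := by
    rw [hb0]
    exact mul_one_div_cancel ha0
  have htail : |∑' m, ∑ n ∈ N m, a n * b n| ≤ 1 / 3 := by
    have hle : ∀ m, |∑ n ∈ N m, a n * b n| ≤ C * c₂ * (d m / ρ m) :=
      fun m => (Finset.abs_sum_le_sum_abs _ _).trans (hab m)
    have habs2 : Summable fun m => |∑ n ∈ N m, a n * b n| :=
      Summable.of_nonneg_of_le (fun m => abs_nonneg _) hle (hsum.mul_left _)
    calc |∑' m, ∑ n ∈ N m, a n * b n|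
        ≤ ∑' m, |∑ n ∈ N m, a n * b n| := by
          have := norm_tsum_le_tsum_norm (f := fun m => ∑ n ∈ N m, a n * b n)
            (by simpa [Real.norm_eq_abs] using habs2)
          simpa [Real.norm_eq_abs] using this
      _ ≤ ∑' m, C * c₂ * (d m / ρ m) := Summable.tsum_le_tsum hle habs2 (hsum.mul_left _)
      _ = C * c₂ * ∑' m, d m / ρ m := tsum_mul_left
      _ ≤ C * c₂ * ε := mul_le_mul_of_nonneg_left hε (mul_nonneg hC.le hc₂.le)
      _ = 1 / 3 := hCc₂ε
  have hne0 : (∑' n : ℤ, a n * b n) ≠ 0 := by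
    rw [hab_eq]
    intro h
    have h1 : a 0 * b 0 + ∑' m, ∑ n ∈ N m, a n * b n = 0 := h
    rw [hab0] at h1
    have h2 : (∑' m, ∑ n ∈ N m, a n * b n) = -1 := by linarith
    rw [h2] at htail
    norm_num at htail
  refine ⟨b, hsq_sum, ?_, summable_abs_iff.mpr hab_sum, hne0, ?_⟩
  · intro n hn0 hnN
    exact hbout n hn0 fun k hk => hnN k ((hNmem k n).1 hk)
  -- (3) the orthogonality relations
  intro k
  have hterm : ∀ m : ℕ, ∑ n ∈ N m, a n * b n / (ρ k - n) = d m * u m * G k m := by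
    intro m
    rw [hGdef, Finset.mul_sum]
    refine Finset.sum_congr rfl fun n hn => ?_
    rw [hbmem m n hn]
    have h1 := hne k n
    have h2 := hne m n
    field_simp
  have habsterm : ∀ m : ℕ, ∑ n ∈ N m, |a n * b n / (ρ k - n)| = |d m * u m| * Gabs k m := by
    intro m
    rw [hGabsdef, Finset.mul_sum]
    refine Finset.sum_congr rfl fun n hn => ?_
    rw [hbmem m n hn]
    have h1 : a n * (d m * u m * a n / (ρ m - n)) / (ρ k - n)
        = d m * u m * (a n ^ 2 / ((ρ k - n) * (ρ m - n))) := by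
      have h2 := hne k n
      have h3 := hne m n
      field_simp
    rw [h1, abs_mul, abs_div, abs_mul (ρ k - (n:ℝ)) (ρ m - (n:ℝ)), abs_of_nonneg (sq_nonneg (a n))]
  have hcm : ∀ m, ∑ n ∈ N m, |a n * b n / (ρ k - n)|
      ≤ (if m = k then C * c₂ / ρ k else C * c₂ / ρ k * (d m / ρ m)) := by
    intro m
    rw [habsterm m]
    by_cases hm : m = k
    · subst hm
      rw [if_pos rfl, hGabskk m]
      have h3 : |d m * u m| * A m ≤ (C * d m) * (c₂ / (d m * ρ m)) :=
        mul_le_mul (hdu m) (hA2 m) (hA0 m).le (mul_nonneg hC.le (hd m).le)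
      refine h3.trans (le_of_eq ?_)
      have hdm := (hd m).ne'
      have hρm' := (hρ m).ne'
      field_simp
    · rw [if_neg hm]
      have h3 : |d m * u m| * Gabs k m ≤ (C * d m) * (c₂ / (ρ k * ρ m)) :=
        mul_le_mul (hdu m) (hGabs2 k m hm) (hGabs0 k m) (mul_nonneg hC.le (hd m).le)
      refine h3.trans (le_of_eq ?_)
      have hρm' := (hρ m).ne'
      have hρk' := (hρ k).ne'
      field_simp
  have hcs2 : Summable (fun m => if m = k then C * c₂ / ρ k else C * c₂ / ρ k * (d m / ρ m)) :=
    hsumIte k _ _ (hsum.mul_left _)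
  obtain ⟨-, hms, heq⟩ := partition_tsum N hdisjN h0N (fun n => a n * b n / (ρ k - n))
    (fun n hn0 hnN => by beta_reduce; rw [hbout n hn0 hnN]; ring) _ hcm hcs2
  have hms' : Summable fun m => d m * u m * G k m := hms.congr hterm
  have hsplit := Summable.tsum_eq_add_tsum_ite hms' k
  rw [heq, tsum_congr hterm, hsplit, hGkk k]
  beta_reduce
  rw [hab0]
  rw [Int.cast_zero, sub_zero]
  linarith [hfix k]
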